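/- L¹-contraction of monotone conservative schemes implies L¹-stability: suppose the map T : ℝ^ℤ → ℝ^ℤ, (Tu)_j = u_j − λ[g(u_{j+1},u_j) − g(u_j,u_{j−1})], is monotone (u_j ≤ v_j for all j implies (Tu)_j ≤ (Tv)_j), conservative, and T(0) = 0. Then for every compactly supported sequence u, Σ_j |(Tu)_j| ≤ Σ_j |u_j|. -/

import Mathlib

private lemma tele_aux (f : ℤ → ℝ) (m : ℤ) :
    ∀ n, m ≤ n → ∑ j ∈ Finset.Icc m n, (f j - f (j - 1)) = f n - f (m - 1) := by
  refine Int.le_induction ?_ ?_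
  · simp
  · intro n hn ih
    have hins : Finset.Icc m (n + 1) = insert (n + 1) (Finset.Icc m n) := by
      ext x; simp only [Finset.mem_Icc, Finset.mem_insert]; omega
    have hnot : (n + 1) ∉ Finset.Icc m n := by simp only [Finset.mem_Icc]; omega
    rw [hins, Finset.sum_insert hnot, ih, show n + 1 - 1 = n from by ring]
    ring

/-- Crandall–Tartar type `ℓ¹`-stability: a monotone three-point conservative scheme with
flux vanishing at the origin does not increase the `ℓ¹` norm of compactly supported
data. -/
theorem monotone_conservative_l1_stable (lam : ℝ) (hlam : 0 < lam)
    (g : ℝ → ℝ → ℝ) (hg : g 0 0 = 0)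
    (T : (ℤ → ℝ) → (ℤ → ℝ))
    (hT : ∀ u : ℤ → ℝ, ∀ j : ℤ,
      T u j = u j - lam * (g (u (j + 1)) (u j) - g (u j) (u (j - 1))))
    (hmono : ∀ u v : ℤ → ℝ, (∀ j, u j ≤ v j) → ∀ j, T u j ≤ T v j)
    (u : ℤ → ℝ) (hsupp : (Function.support u).Finite) :
    ∑' j : ℤ, |T u j| ≤ ∑' j : ℤ, |u j| := by
  classical
  set s : Finset ℤ := insert 0 hsupp.toFinset with hs
  have hne : s.Nonempty := ⟨0, Finset.mem_insert_self _ _⟩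
  set a : ℤ := s.min' hne with ha
  set b : ℤ := s.max' hne with hb
  have hab : a ≤ b := s.min'_le _ (s.max'_mem hne)
  have hbound : ∀ j, u j ≠ 0 → a ≤ j ∧ j ≤ b := by
    intro j hj
    have hjs : j ∈ s := Finset.mem_insert_of_mem (hsupp.mem_toFinset.mpr hj)
    exact ⟨s.min'_le _ hjs, s.le_max' _ hjs⟩
  set w : ℤ → ℝ := fun j => max (u j) 0 with hw
  set z : ℤ → ℝ := fun j => min (u j) 0 with hz
  have hwbound : ∀ j, w j ≠ 0 → a ≤ j ∧ j ≤ b := by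
    intro j hj
    refine hbound j ?_
    intro h; apply hj; simp [hw, h]
  have hzbound : ∀ j, z j ≠ 0 → a ≤ j ∧ j ≤ b := by
    intro j hj
    refine hbound j ?_
    intro h; apply hj; simp [hz, h]
  have hT0 : ∀ j, T (fun _ => 0) j = 0 := by
    intro j; rw [hT]; simp [hg]
  -- pointwise bound
  have key : ∀ j, |T u j| ≤ T w j - T z j := by
    intro j
    have h1 : T u j ≤ T w j := hmono u w (fun j => le_max_left _ _) j
    have h2 : T z j ≤ T u j := hmono z u (fun j => min_le_left _ _) j
    have h3 : 0 ≤ T w j := by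
      have := hmono (fun _ => 0) w (fun j => le_max_right _ _) j
      rw [hT0 j] at this; exact this
    have h4 : T z j ≤ 0 := by
      have := hmono z (fun _ => 0) (fun j => min_le_right _ _) j
      rw [hT0 j] at this; exact this
    rw [abs_le]; constructor <;> linarith
  set N : Finset ℤ := Finset.Icc (a - 1) (b + 1) with hN
  -- vanishing of T v outside N
  have hTv0 : ∀ v : ℤ → ℝ, (∀ j, v j ≠ 0 → a ≤ j ∧ j ≤ b) → ∀ j ∉ N, T v j = 0 := by
    intro v hv j hj
    rw [hN, Finset.mem_Icc] at hj
    push_neg at hj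
    have h1 : v j = 0 := by
      by_contra h; have := hv j h; omega
    have h2 : v (j + 1) = 0 := by
      by_contra h; have := hv _ h; omega
    have h3 : v (j - 1) = 0 := by
      by_contra h; have := hv _ h; omega
    rw [hT, h1, h2, h3]; simp [hg]
  -- conservation on N
  have hcons : ∀ v : ℤ → ℝ, (∀ j, v j ≠ 0 → a ≤ j ∧ j ≤ b) →
      ∑ j ∈ N, T v j = ∑ j ∈ N, v j := by
    intro v hv
    have hrw : ∑ j ∈ N, T v j
        = ∑ j ∈ N, v j - lam * ∑ j ∈ N, ((fun i => g (v (i + 1)) (v i)) j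
            - (fun i => g (v (i + 1)) (v i)) (j - 1)) := by
      rw [Finset.mul_sum, ← Finset.sum_sub_distrib]
      refine Finset.sum_congr rfl fun j _ => ?_
      rw [hT]
      beta_reduce
      rw [show j - 1 + 1 = j from by ring]
    rw [hrw, tele_aux _ _ _ (by omega)]
    have e1 : v (b + 1 + 1) = 0 := by
      by_contra h; have := hv _ h; omega
    have e2 : v (b + 1) = 0 := by
      by_contra h; have := hv _ h; omega
    have e3 : v (a - 1 - 1 + 1) = 0 := by
      by_contra h; have := hv _ h; omega
    have e4 : v (a - 1 - 1) = 0 := by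
      by_contra h; have := hv _ h; omega
    rw [e1, e2, e3, e4, hg]
    ring
  -- tsum reductions
  have hTu0 : ∀ j ∉ N, |T u j| = 0 := by
    intro j hj; rw [hTv0 u hbound j hj, abs_zero]
  have hu0 : ∀ j ∉ N, |u j| = 0 := by
    intro j hj
    rw [hN, Finset.mem_Icc] at hj
    push_neg at hj
    have : u j = 0 := by by_contra h; have := hbound j h; omega
    rw [this, abs_zero]
  rw [tsum_eq_sum hTu0, tsum_eq_sum hu0]
  calc ∑ j ∈ N, |T u j| ≤ ∑ j ∈ N, (T w j - T z j) :=
        Finset.sum_le_sum fun j _ => key j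
    _ = ∑ j ∈ N, T w j - ∑ j ∈ N, T z j := Finset.sum_sub_distrib _ _
    _ = ∑ j ∈ N, w j - ∑ j ∈ N, z j := by rw [hcons w hwbound, hcons z hzbound]
    _ = ∑ j ∈ N, (w j - z j) := (Finset.sum_sub_distrib _ _).symm
    _ = ∑ j ∈ N, |u j| := by
        refine Finset.sum_congr rfl fun j _ => ?_
        rcases le_total (u j) 0 with h | h
        · simp [hw, hz, max_eq_right h, min_eq_left h, abs_of_nonpos h]
        · simp [hw, hz, max_eq_left h, min_eq_right h, abs_of_nonneg h]
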